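/- For every positive integer m, binom(2m, m) ≥ (4^m / sqrt(π·m)) · exp(-1/(8m) - 1/(180·m^3)). -/

import Mathlib

open Stirling Real Filter Finset
open scoped Topology

namespace Stmt4Aux

noncomputable def L (n : ℕ) : ℝ := Real.log (stirlingSeq n)

noncomputable def f (t : ℝ) : ℝ := 1 / (12 * t) - 1 / (360 * t ^ 3)

lemma diff_ge (k : ℕ) :
    (1 / 3 : ℝ) * (1 / (2 * (↑(k + 1) : ℝ) + 1)) ^ 2
      + (1 / 5) * (1 / (2 * (↑(k + 1) : ℝ) + 1)) ^ 4
      ≤ L (k + 1) - L (k + 2) := by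
  have h := log_stirlingSeq_diff_hasSum k
  have hle := sum_le_hasSum ({0, 1} : Finset ℕ) (fun i _ => by positivity) h
  rw [Finset.sum_pair (by norm_num)] at hle
  refine le_trans (le_of_eq ?_) hle
  norm_num
  ring

lemma diff_le (k : ℕ) :
    L (k + 1) - L (k + 2) ≤ 1 / (12 * (↑(k + 1) : ℝ)) - 1 / (12 * (↑(k + 2) : ℝ)) := by
  set x : ℝ := 1 / (2 * (↑(k + 1) : ℝ) + 1) with hx
  have hx0 : 0 < x := by positivity
  have hxlt : x ^ 2 < 1 := by
    have hk : (0:ℝ) ≤ (k:ℝ) := Nat.cast_nonneg k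
    apply pow_lt_one₀ hx0.le _ (by norm_num)
    rw [hx, div_lt_one (by positivity)]
    push_cast
    linarith
  have hgeo : HasSum (fun j : ℕ => (1 / 3 : ℝ) * (x ^ 2) ^ (j + 1))
      ((1 / 3) * (x ^ 2 * (1 - x ^ 2)⁻¹)) := by
    have := (hasSum_geometric_of_lt_one (by positivity) hxlt).mul_left (x ^ 2)
    simp_rw [← pow_succ'] at this
    exact this.mul_left (1 / 3)
  have h := log_stirlingSeq_diff_hasSum k
  have hle := hasSum_le (fun j => ?_) h hgeo
  · refine hle.trans (le_of_eq ?_)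
    have hval : ∀ t : ℝ, 1 ≤ t →
        (1:ℝ)/3 * ((1/(2*t+1))^2 * (1 - (1/(2*t+1))^2)⁻¹) = 1/(12*t) - 1/(12*(t+1)) := by
      intro t ht
      have h0 : (0:ℝ) < t := by linarith
      have h1 : (2*t+1) ≠ 0 := by positivity
      have e1 : (1:ℝ) - (1/(2*t+1))^2 = (4*t*(t+1))/(2*t+1)^2 := by field_simp; ring
      rw [e1]
      have h2 : (4*t*(t+1)) ≠ 0 := by positivity
      field_simp
      ring
    have hk : (0:ℝ) ≤ (k:ℝ) := Nat.cast_nonneg k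
    have := hval ((k:ℝ)+1) (by linarith)
    rw [hx]
    push_cast
    convert this using 2 <;> push_cast <;> ring
  · show (1 : ℝ) / (2 * ↑(j + 1) + 1) * ((1 / (2 * (↑(k + 1) : ℝ) + 1)) ^ 2) ^ (j + 1)
      ≤ (1 / 3) * (x ^ 2) ^ (j + 1)
    rw [hx]
    have hpos : (0 : ℝ) ≤ ((1 / (2 * (↑(k + 1) : ℝ) + 1)) ^ 2) ^ (j + 1) := by positivity
    refine mul_le_mul_of_nonneg_right ?_ hpos
    rw [div_le_div_iff₀ (by positivity) (by norm_num)]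
    have : (0 : ℝ) ≤ (j : ℝ) := Nat.cast_nonneg j
    push_cast
    linarith

lemma key_poly (t : ℝ) (ht : 1 ≤ t) :
    f t - f (t + 1) ≤ (1 / 3) * (1 / (2 * t + 1)) ^ 2 + (1 / 5) * (1 / (2 * t + 1)) ^ 4 := by
  have ht0 : 0 < t := by linarith
  have h1 : (0 : ℝ) < t + 1 := by linarith
  have h2 : (0 : ℝ) < 2 * t + 1 := by linarith
  have key : ((1 / 3 : ℝ) * (1 / (2 * t + 1)) ^ 2 + (1 / 5) * (1 / (2 * t + 1)) ^ 4)
      - (f t - f (t + 1))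
      = (10 * (t * (t + 1)) ^ 2 + 11 * (t * (t + 1)) + 1)
        / (360 * t ^ 3 * (t + 1) ^ 3 * (2 * t + 1) ^ 4) := by
    unfold f
    field_simp
    ring
  have hpos : (0 : ℝ) ≤ (10 * (t * (t + 1)) ^ 2 + 11 * (t * (t + 1)) + 1)
      / (360 * t ^ 3 * (t + 1) ^ 3 * (2 * t + 1) ^ 4) := by positivity
  linarith

lemma L_tendsto : Tendsto L atTop (𝓝 (Real.log (Real.sqrt π))) := by
  have h : ContinuousAt Real.log (Real.sqrt π) :=
    Real.continuousAt_log (by positivity)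
  exact h.tendsto.comp tendsto_stirlingSeq_sqrt_pi

lemma tail_tendsto (c : ℝ) (hc : 0 < c) :
    Tendsto (fun k : ℕ => 1 / (c * ((k : ℝ) + 1))) atTop (𝓝 0) := by
  have hn : Tendsto (fun k : ℕ => ((k : ℝ))) atTop atTop := tendsto_natCast_atTop_atTop
  have hg : Tendsto (fun k : ℕ => c * ((k : ℝ) + 1)) atTop atTop :=
    (tendsto_atTop_add_const_right atTop 1 hn).const_mul_atTop hc
  have h2 := hg.inv_tendsto_atTop
  simpa [one_div, Pi.inv_def] using h2

lemma f_tendsto : Tendsto (fun k : ℕ => f ((k : ℝ) + 1)) atTop (𝓝 0) := by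
  have h1 := tail_tendsto 12 (by norm_num)
  have h3 : Tendsto (fun k : ℕ => 1 / (360 * ((k : ℝ) + 1) ^ 3)) atTop (𝓝 0) := by
    have hn : Tendsto (fun k : ℕ => ((k : ℝ))) atTop atTop := tendsto_natCast_atTop_atTop
    have hg : Tendsto (fun k : ℕ => 360 * ((k : ℝ) + 1) ^ 3) atTop atTop := by
      apply Tendsto.const_mul_atTop (by norm_num : (0:ℝ) < 360)
      exact (tendsto_pow_atTop (by norm_num : (3:ℕ) ≠ 0)).comp
        (tendsto_atTop_add_const_right atTop 1 hn)
    have h2 := hg.inv_tendsto_atTop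
    simpa [one_div, Pi.inv_def] using h2
  have := h1.sub h3
  simpa [f] using this

lemma L_le (n : ℕ) (hn : 0 < n) : L n ≤ Real.log (Real.sqrt π) + 1 / (12 * (n : ℝ)) := by
  set c := Real.log (Real.sqrt π)
  set G : ℕ → ℝ := fun k => L (k + 1) - 1 / (12 * ((k : ℝ) + 1)) with hG
  have hmono : Monotone G := by
    apply monotone_nat_of_le_succ
    intro k
    have h := diff_le k
    push_cast at h
    simp only [hG]
    push_cast
    have : ((k : ℝ) + 1 + 1) = (k : ℝ) + 2 := by ring
    rw [this]
    linarith
  have hlim : Tendsto G atTop (𝓝 c) := by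
    have h1 : Tendsto (fun k : ℕ => L (k + 1)) atTop (𝓝 c) :=
      L_tendsto.comp (tendsto_add_atTop_nat 1)
    have h2 := tail_tendsto 12 (by norm_num)
    have h12 := h1.sub h2
    rw [sub_zero] at h12
    rw [hG]
    exact h12
  have hkey := hmono.ge_of_tendsto hlim (n - 1)
  have hn1 : n - 1 + 1 = n := Nat.succ_pred_eq_of_pos hn
  simp only [hG, hn1] at hkey
  have hcast : ((n - 1 : ℕ) : ℝ) + 1 = (n : ℝ) := by
    rw [Nat.cast_sub hn]
    push_cast
    ring
  rw [hcast] at hkey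
  linarith

lemma L_ge (n : ℕ) (hn : 0 < n) : Real.log (Real.sqrt π) + f (n : ℝ) ≤ L n := by
  set c := Real.log (Real.sqrt π)
  set P : ℕ → ℝ := fun k => L (k + 1) - f ((k : ℝ) + 1) with hP
  have hanti : Antitone P := by
    apply antitone_nat_of_succ_le
    intro k
    have h1 := diff_ge k
    have h2 := key_poly ((k : ℝ) + 1) (by have := Nat.cast_nonneg (α := ℝ) k; linarith)
    push_cast at h1
    simp only [hP]
    push_cast
    have e1 : ((k : ℝ) + 1 + 1) = (k : ℝ) + 2 := by ring
    rw [e1]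
    have e2 : ((k : ℝ) + 1) + 1 = (k : ℝ) + 2 := by ring
    rw [e2] at h2
    linarith
  have hlim : Tendsto P atTop (𝓝 c) := by
    have h1 : Tendsto (fun k : ℕ => L (k + 1)) atTop (𝓝 c) :=
      L_tendsto.comp (tendsto_add_atTop_nat 1)
    have h12 := h1.sub f_tendsto
    rw [sub_zero] at h12
    rw [hP]
    exact h12
  have hkey := hanti.le_of_tendsto hlim (n - 1)
  have hn1 : n - 1 + 1 = n := Nat.succ_pred_eq_of_pos hn
  simp only [hP, hn1] at hkey
  have hcast : ((n - 1 : ℕ) : ℝ) + 1 = (n : ℝ) := by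
    rw [Nat.cast_sub hn]
    push_cast
    ring
  rw [hcast] at hkey
  linarith

lemma choose_eq (m : ℕ) (hm : 0 < m) :
    ((2 * m).choose m : ℝ)
      = stirlingSeq (2 * m) / stirlingSeq m ^ 2 * (4 ^ m / Real.sqrt m) := by
  have hm0 : (0 : ℝ) < m := by exact_mod_cast hm
  have hfact : ∀ n : ℕ, 0 < n →
      ((Nat.factorial n) : ℝ) = stirlingSeq n * (Real.sqrt (2 * n) * ((n : ℝ) / Real.exp 1) ^ n) := by
    intro n hn
    have hn0 : (0 : ℝ) < n := by exact_mod_cast hn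
    rw [stirlingSeq]
    have hd : Real.sqrt (2 * n) * ((n : ℝ) / Real.exp 1) ^ n ≠ 0 := by positivity
    field_simp
  have hc : ((2 * m).choose m : ℝ)
      = ((Nat.factorial (2 * m)) : ℝ) / ((Nat.factorial m : ℝ) * (Nat.factorial m : ℝ)) := by
    rw [Nat.cast_choose ℝ (by omega : m ≤ 2 * m), show 2 * m - m = m from by omega]
  rw [hc, hfact (2 * m) (by omega), hfact m hm]
  have h2m : ((2 * m : ℕ) : ℝ) = 2 * (m : ℝ) := by push_cast; ring
  rw [h2m]
  have hsq : Real.sqrt (2 * (2 * (m : ℝ))) = 2 * Real.sqrt m := by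
    rw [show (2 : ℝ) * (2 * (m : ℝ)) = 4 * m by ring,
      Real.sqrt_mul (by norm_num) (m : ℝ), show Real.sqrt 4 = 2 by
        rw [show (4 : ℝ) = 2 ^ 2 by norm_num, Real.sqrt_sq (by norm_num)]]
  rw [hsq]
  set A := ((m : ℝ) / Real.exp 1) ^ m with hA
  have hA0 : A ≠ 0 := by rw [hA]; positivity
  have hpow2 : (2 * (m : ℝ) / Real.exp 1) ^ (2 * m) = 4 ^ m * (A * A) := by
    rw [hA, pow_mul, ← mul_pow, ← mul_pow]
    congr 1
    ring
  rw [hpow2]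
  set s := stirlingSeq m with hs
  set r := Real.sqrt (m : ℝ) with hr
  set q := Real.sqrt (2 * (m : ℝ)) with hq'
  have hs0 : s ≠ 0 := by
    have := stirlingSeq'_pos (m - 1)
    rw [show m - 1 + 1 = m from by omega] at this
    exact this.ne'
  have hr0 : r ≠ 0 := by rw [hr]; positivity
  have hsmm : r * r = (m : ℝ) := Real.mul_self_sqrt hm0.le
  have hq : q * q = 2 * (m : ℝ) := Real.mul_self_sqrt (by positivity)
  have expand : s * (q * A) * (s * (q * A)) = s ^ 2 * (2 * (r * r)) * (A * A) := by
    calc s * (q * A) * (s * (q * A)) = s ^ 2 * (q * q) * (A * A) := by ring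
    _ = s ^ 2 * (2 * (r * r)) * (A * A) := by rw [hq, hsmm]
  rw [expand]
  field_simp

end Stmt4Aux

theorem stmt_4 (m : ℕ) (hm : 0 < m) :
    (Nat.choose (2 * m) m : ℝ) ≥
      (4 ^ m / Real.sqrt (Real.pi * m)) *
        Real.exp (-1 / (8 * m) - 1 / (180 * (m : ℝ) ^ 3)) := by
  have hm0 : (0 : ℝ) < m := by exact_mod_cast hm
  have hm1 : (1 : ℝ) ≤ m := by exact_mod_cast hm
  have hge := Stmt4Aux.L_ge (2 * m) (by omega)
  have hle := Stmt4Aux.L_le m hm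
  have hs2 : (0 : ℝ) < Stirling.stirlingSeq (2 * m) := by
    have := Stirling.stirlingSeq'_pos (2 * m - 1)
    rwa [show 2 * m - 1 + 1 = 2 * m from by omega] at this
  have hs1 : (0 : ℝ) < Stirling.stirlingSeq m := by
    have := Stirling.stirlingSeq'_pos (m - 1)
    rwa [show m - 1 + 1 = m from by omega] at this
  have hπ : (0 : ℝ) < Real.sqrt Real.pi := Real.sqrt_pos.mpr Real.pi_pos
  rw [Stmt4Aux.choose_eq m hm]
  have e2 : Stirling.stirlingSeq (2 * m) = Real.exp (Stmt4Aux.L (2 * m)) :=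
    (Real.exp_log hs2).symm
  have e1 : Stirling.stirlingSeq m = Real.exp (Stmt4Aux.L m) := (Real.exp_log hs1).symm
  have h1 : Stirling.stirlingSeq (2 * m) / Stirling.stirlingSeq m ^ 2
      = Real.exp (Stmt4Aux.L (2 * m) - 2 * Stmt4Aux.L m) := by
    rw [e1, e2, sq, ← Real.exp_add, ← Real.exp_sub]
    congr 1
    ring
  have hcast2m : ((2 * m : ℕ) : ℝ) = 2 * (m : ℝ) := by push_cast; ring
  rw [hcast2m] at hge
  have hδ : -1 / (8 * (m : ℝ)) - 1 / (180 * (m : ℝ) ^ 3)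
      ≤ Stmt4Aux.f (2 * (m : ℝ)) - 1 / (6 * (m : ℝ)) := by
    have key : Stmt4Aux.f (2 * (m : ℝ)) - 1 / (6 * (m : ℝ))
        - (-1 / (8 * (m : ℝ)) - 1 / (180 * (m : ℝ) ^ 3)) = 15 / (2880 * (m : ℝ) ^ 3) := by
      rw [Stmt4Aux.f]
      field_simp
      ring
    have hpos : (0 : ℝ) < 15 / (2880 * (m : ℝ) ^ 3) := by positivity
    linarith
  have h2 : (-1 / (8 * (m : ℝ)) - 1 / (180 * (m : ℝ) ^ 3)) - Real.log (Real.sqrt Real.pi)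
      ≤ Stmt4Aux.L (2 * m) - 2 * Stmt4Aux.L m := by
    have h6 : 1 / (6 * (m : ℝ)) = 2 * (1 / (12 * (m : ℝ))) := by
      field_simp
      ring
    linarith
  have h3 : Real.exp ((-1 / (8 * (m : ℝ)) - 1 / (180 * (m : ℝ) ^ 3))
        - Real.log (Real.sqrt Real.pi)) * (4 ^ m / Real.sqrt m)
      ≤ Stirling.stirlingSeq (2 * m) / Stirling.stirlingSeq m ^ 2 * (4 ^ m / Real.sqrt m) := by
    rw [h1]
    have h4 : (0 : ℝ) ≤ 4 ^ m / Real.sqrt m := by positivity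
    exact mul_le_mul_of_nonneg_right (Real.exp_le_exp.mpr h2) h4
  refine le_trans (le_of_eq ?_) h3
  rw [show Real.exp (-1 / (8 * (m : ℝ)) - 1 / (180 * (m : ℝ) ^ 3) - Real.log (Real.sqrt Real.pi))
      = Real.exp (-1 / (8 * (m : ℝ)) - 1 / (180 * (m : ℝ) ^ 3)) / Real.sqrt Real.pi from by
    rw [Real.exp_sub, Real.exp_log hπ]]
  rw [Real.sqrt_mul Real.pi_pos.le]
  ring
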